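/- Let k be an integer, and let (X,d), (X̂,d̂) be Q(k)-objects over ℤ such that every X_{i,j} and every X̂_{i,j} is a free abelian group; let e, ê be their leading parts. Let γ : ⊕_{i,j} X_{i,j} → ⊕_{i,j} X̂_{i,j} be a group homomorphism with γ ∘ d_j = d̂_j ∘ γ and γ(X_{i,j}) ⊆ ⊕_{l≥i} X̂_{l,j}, with δ_{i,j} := pr̂_{i,j} ∘ γ|_{X_{i,j}}, and assume that for all i,j the map ker e_{i,j}/im e_{i−1,j−k} → ker ê_{i,j}/im ê_{i−1,j−k} induced by δ is an isomorphism. Then for every abelian group M: (X ⊗ M, d ⊗ id_M) and (X̂ ⊗ M, d̂ ⊗ id_M) are Q(k)-objects over ℤ with leading parts e ⊗ id_M and ê ⊗ id_M, the map γ ⊗ id_M satisfies the same compatibilities, and for all i,j the map ker(e_{i,j} ⊗ id_M)/im(e_{i−1,j−k} ⊗ id_M) → ker(ê_{i,j} ⊗ id_M)/im(ê_{i−1,j−k} ⊗ id_M) induced by δ ⊗ id_M is an isomorphism. -/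

import Mathlib

open DirectSum TensorProduct

/-- The leading part `e_{i,j} := pr_{i+1,j+k} ∘ d_j ∘ incl_{i,j} : X_{i,j} → X_{i+1,j+k}`
of a `Q(k)`-object `(X, d)`. -/
noncomputable def leadingPart (R : Type*) [CommRing R] (k : ℤ)
    (X : ℤ → ℤ → Type*) [∀ i j, AddCommGroup (X i j)] [∀ i j, Module R (X i j)]
    (d : ∀ j : ℤ, (⨁ i, X i j) →ₗ[R] ⨁ i, X i (j + k)) (i j : ℤ) :
    X i j →ₗ[R] X (i + 1) (j + k) :=
  (DirectSum.component R ℤ (fun l => X l (j + k)) (i + 1)) ∘ₗ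
    (d j) ∘ₗ (DirectSum.lof R ℤ (fun l => X l j) i)

/-- The component `δ_{i,j} := pr̂_{i,j} ∘ γ ∘ incl_{i,j} : X_{i,j} → X̂_{i,j}`
of a morphism `γ` of `Q(k)`-objects. -/
noncomputable def diagPart (R : Type*) [CommRing R]
    (X Y : ℤ → ℤ → Type*) [∀ i j, AddCommGroup (X i j)] [∀ i j, Module R (X i j)]
    [∀ i j, AddCommGroup (Y i j)] [∀ i j, Module R (Y i j)]
    (γ : ∀ j : ℤ, (⨁ i, X i j) →ₗ[R] ⨁ i, Y i j) (i j : ℤ) :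
    X i j →ₗ[R] Y i j :=
  (DirectSum.component R ℤ (fun l => Y l j) i) ∘ₗ
    (γ j) ∘ₗ (DirectSum.lof R ℤ (fun l => X l j) i)

/-- `d ⊗ id_M`, viewed as a map `⨁ i (X_{i,j} ⊗ M) → ⨁ i (X_{i,j+k} ⊗ M)` via the canonical
identification `(⨁ i X_{i,j}) ⊗ M ≃ ⨁ i (X_{i,j} ⊗ M)`. -/
noncomputable def tensorQ (k : ℤ)
    (X : ℤ → ℤ → Type) [∀ i j, AddCommGroup (X i j)]
    (d : ∀ j : ℤ, (⨁ i, X i j) →ₗ[ℤ] ⨁ i, X i (j + k))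
    (M : Type) [AddCommGroup M] (j : ℤ) :
    (⨁ i, (X i j) ⊗[ℤ] M) →ₗ[ℤ] ⨁ i, (X i (j + k)) ⊗[ℤ] M :=
  (TensorProduct.directSumLeft ℤ ℤ (fun i => X i (j + k)) M).toLinearMap ∘ₗ
    (LinearMap.rTensor M (d j)) ∘ₗ
      (TensorProduct.directSumLeft ℤ ℤ (fun i => X i j) M).symm.toLinearMap

/-- `γ ⊗ id_M`, viewed as a map `⨁ i (X_{i,j} ⊗ M) → ⨁ i (X̂_{i,j} ⊗ M)`. -/
noncomputable def tensorG
    (X Y : ℤ → ℤ → Type) [∀ i j, AddCommGroup (X i j)] [∀ i j, AddCommGroup (Y i j)]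
    (γ : ∀ j : ℤ, (⨁ i, X i j) →ₗ[ℤ] ⨁ i, Y i j)
    (M : Type) [AddCommGroup M] (j : ℤ) :
    (⨁ i, (X i j) ⊗[ℤ] M) →ₗ[ℤ] ⨁ i, (Y i j) ⊗[ℤ] M :=
  (TensorProduct.directSumLeft ℤ ℤ (fun i => Y i j) M).toLinearMap ∘ₗ
    (LinearMap.rTensor M (γ j)) ∘ₗ
      (TensorProduct.directSumLeft ℤ ℤ (fun i => X i j) M).symm.toLinearMap



section DSHelp

variable {X : ℤ → Type} [∀ i, AddCommGroup (X i)] {Y : ℤ → Type} [∀ i, AddCommGroup (Y i)]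

/-- If `F` kills generators outside `P` at component `m`, and `a` vanishes on `P`,
then `(F a) m = 0`. -/
lemma comp_vanish (F : (⨁ i, X i) →ₗ[ℤ] ⨁ i, Y i) (m : ℤ) (P : ℤ → Prop)
    (hF : ∀ (i : ℤ) (x : X i), ¬ P i → (F (DirectSum.lof ℤ ℤ X i x)) m = 0)
    (a : ⨁ i, X i) (ha : ∀ l, P l → a l = 0) : (F a) m = 0 := by
  classical
  conv_lhs => rw [← DirectSum.sum_support_of a]
  rw [map_sum, DFinsupp.finset_sum_apply]
  apply Finset.sum_eq_zero
  intro i _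
  by_cases hP : P i
  · rw [ha i hP, map_zero, map_zero]; rfl
  · exact hF i (a i) hP

end DSHelp

section QObj

variable (k : ℤ) (X : ℤ → ℤ → Type) [∀ i j, AddCommGroup (X i j)]
  (Y : ℤ → ℤ → Type) [∀ i j, AddCommGroup (Y i j)]

lemma leadingPart_sq
    (d : ∀ j : ℤ, (⨁ i, X i j) →ₗ[ℤ] ⨁ i, X i (j + k))
    (hdd : ∀ j, d (j + k) ∘ₗ d j = 0)
    (hfilt : ∀ (j i : ℤ) (x : X i j) (l : ℤ), l ≤ i →
      (d j (DirectSum.lof ℤ ℤ (fun l => X l j) i x)) l = 0)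
    (i j : ℤ) (x : X i j) :
    leadingPart ℤ k X d (i + 1) (j + k) (leadingPart ℤ k X d i j x) = 0 := by
  classical
  set a : ⨁ l, X l (j + k) := d j (DirectSum.lof ℤ ℤ (fun l => X l j) i x) with ha
  have key : (d (j + k) a) (i + 1 + 1) = 0 := by
    have h0 : d (j + k) a = 0 := by
      have := LinearMap.congr_fun (hdd j) (DirectSum.lof ℤ ℤ (fun l => X l j) i x)
      simpa [ha] using this
    rw [h0]; rfl
  have hr : (d (j + k) (a - DirectSum.lof ℤ ℤ (fun l => X l (j + k)) (i + 1) (a (i + 1))))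
      (i + 1 + 1) = 0 := by
    apply comp_vanish _ _ (fun l => l < i + 1 + 1)
    · intro i' x' hi'
      exact hfilt (j + k) i' x' (i + 1 + 1) (by omega)
    · intro l hl
      rw [DFinsupp.sub_apply]
      by_cases h : l = i + 1
      · subst h
        rw [DirectSum.lof_eq_of, DirectSum.of_eq_same, sub_self]
      · rw [DirectSum.lof_eq_of, DirectSum.of_eq_of_ne _ _ _ h,
          hfilt j i x l (by omega), sub_zero]
  have hsplit : d (j + k) (DirectSum.lof ℤ ℤ (fun l => X l (j + k)) (i + 1) (a (i + 1)))
      = d (j + k) a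
        - d (j + k) (a - DirectSum.lof ℤ ℤ (fun l => X l (j + k)) (i + 1) (a (i + 1))) := by
    rw [map_sub, sub_sub_cancel]
  show (d (j + k) (DirectSum.lof ℤ ℤ (fun l => X l (j + k)) (i + 1)
      ((d j (DirectSum.lof ℤ ℤ (fun l => X l j) i x)) (i + 1)))) (i + 1 + 1) = 0
  rw [← ha, hsplit, DFinsupp.sub_apply, key, hr, sub_zero]

lemma diagPart_comm
    (d : ∀ j : ℤ, (⨁ i, X i j) →ₗ[ℤ] ⨁ i, X i (j + k))
    (dh : ∀ j : ℤ, (⨁ i, Y i j) →ₗ[ℤ] ⨁ i, Y i (j + k))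
    (hfilt : ∀ (j i : ℤ) (x : X i j) (l : ℤ), l ≤ i →
      (d j (DirectSum.lof ℤ ℤ (fun l => X l j) i x)) l = 0)
    (hfilth : ∀ (j i : ℤ) (x : Y i j) (l : ℤ), l ≤ i →
      (dh j (DirectSum.lof ℤ ℤ (fun l => Y l j) i x)) l = 0)
    (γ : ∀ j : ℤ, (⨁ i, X i j) →ₗ[ℤ] ⨁ i, Y i j)
    (hγd : ∀ j, γ (j + k) ∘ₗ d j = dh j ∘ₗ γ j)
    (hγfilt : ∀ (j i : ℤ) (x : X i j) (l : ℤ), l < i →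
      (γ j (DirectSum.lof ℤ ℤ (fun l => X l j) i x)) l = 0)
    (i j : ℤ) (x : X i j) :
    diagPart ℤ X Y γ (i + 1) (j + k) (leadingPart ℤ k X d i j x)
      = leadingPart ℤ k Y dh i j (diagPart ℤ X Y γ i j x) := by
  classical
  set a : ⨁ l, X l (j + k) := d j (DirectSum.lof ℤ ℤ (fun l => X l j) i x) with ha
  set b : ⨁ l, Y l j := γ j (DirectSum.lof ℤ ℤ (fun l => X l j) i x) with hb
  have step1 : (γ (j + k) (a - DirectSum.lof ℤ ℤ (fun l => X l (j + k)) (i + 1) (a (i + 1))))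
      (i + 1) = 0 := by
    apply comp_vanish _ _ (fun l => l ≤ i + 1)
    · intro i' x' hi'
      exact hγfilt (j + k) i' x' (i + 1) (by omega)
    · intro l hl
      rw [DFinsupp.sub_apply]
      by_cases h : l = i + 1
      · subst h; rw [DirectSum.lof_eq_of, DirectSum.of_eq_same, sub_self]
      · rw [DirectSum.lof_eq_of, DirectSum.of_eq_of_ne _ _ _ h,
          hfilt j i x l (by omega), sub_zero]
  have step2 : (dh j (b - DirectSum.lof ℤ ℤ (fun l => Y l j) i (b i))) (i + 1) = 0 := by
    apply comp_vanish _ _ (fun l => l < i + 1)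
    · intro i' x' hi'
      exact hfilth j i' x' (i + 1) (by omega)
    · intro l hl
      rw [DFinsupp.sub_apply]
      by_cases h : l = i
      · subst h; rw [DirectSum.lof_eq_of, DirectSum.of_eq_same, sub_self]
      · rw [DirectSum.lof_eq_of, DirectSum.of_eq_of_ne _ _ _ h,
          hγfilt j i x l (by omega), sub_zero]
  have hmid : (γ (j + k) a) (i + 1) = (dh j b) (i + 1) := by
    rw [ha, hb]
    have := LinearMap.congr_fun (hγd j) (DirectSum.lof ℤ ℤ (fun l => X l j) i x)
    simp only [LinearMap.comp_apply] at this
    rw [this]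
  show (γ (j + k) (DirectSum.lof ℤ ℤ (fun l => X l (j + k)) (i + 1) (a (i + 1)))) (i + 1)
      = (dh j (DirectSum.lof ℤ ℤ (fun l => Y l j) i (b i))) (i + 1)
  have e1 : γ (j + k) (DirectSum.lof ℤ ℤ (fun l => X l (j + k)) (i + 1) (a (i + 1)))
      = γ (j + k) a
        - γ (j + k) (a - DirectSum.lof ℤ ℤ (fun l => X l (j + k)) (i + 1) (a (i + 1))) := by
    rw [map_sub, sub_sub_cancel]
  have e2 : dh j (DirectSum.lof ℤ ℤ (fun l => Y l j) i (b i))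
      = dh j b - dh j (b - DirectSum.lof ℤ ℤ (fun l => Y l j) i (b i)) := by
    rw [map_sub, sub_sub_cancel]
  rw [e1, e2, DFinsupp.sub_apply, DFinsupp.sub_apply, step1, step2, hmid]

end QObj


section VFG

set_option maxHeartbeats 1000000 in
set_option synthInstance.maxHeartbeats 400000 in
lemma vanish_fg {F M : Type} [AddCommGroup F] [AddCommGroup M]
    (N₀ : Submodule ℤ F) (hfg : N₀.FG) (u : (↥N₀) ⊗[ℤ] M)
    (h : LinearMap.rTensor M N₀.subtype u = 0) :
    ∃ (N₁ : Submodule ℤ F) (hle : N₀ ≤ N₁), N₁.FG ∧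
      LinearMap.rTensor M (Submodule.inclusion hle) u = 0 := by
  classical
  let ι := {P : Submodule ℤ F // P.FG}
  haveI : Nonempty ι := ⟨⟨⊥, Submodule.fg_bot⟩⟩
  haveI : IsDirected ι (· ≤ ·) :=
    ⟨fun P Q => ⟨⟨P.1 ⊔ Q.1, P.2.sup Q.2⟩, show P.1 ≤ P.1 ⊔ Q.1 from le_sup_left,
      show Q.1 ≤ P.1 ⊔ Q.1 from le_sup_right⟩⟩
  let G : ι → Type _ := fun P => ↥P.1
  let f : ∀ i j : ι, i ≤ j → G i →ₗ[ℤ] G j := fun _ _ h => Submodule.inclusion h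
  haveI hds : DirectedSystem G (fun i j h => f i j h) := by
    constructor
    · intro i x; rfl
    · intro k j i hij hjk x; rfl
  let Φ :=
    Module.DirectLimit.lift ℤ ι G f (fun P => P.1.subtype) (fun i j hij x => rfl)
  have Φof : ∀ (i : ι) (x : G i), Φ (Module.DirectLimit.of ℤ ι G f i x) = (x : F) :=
    fun i x => Module.DirectLimit.lift_of _ _ _
  have Φinj : Function.Injective Φ := by
    intro z w hzw
    have hz : Φ (z - w) = 0 := by rw [map_sub, hzw, sub_self]
    obtain ⟨i, x, hx⟩ := Module.DirectLimit.exists_of (z - w)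
    rw [← hx, Φof] at hz
    have hx0 : x = 0 := Subtype.ext hz
    rw [hx0, map_zero] at hx
    exact sub_eq_zero.mp hx.symm
  have Φsurj : Function.Surjective Φ := fun x =>
    ⟨Module.DirectLimit.of ℤ ι G f ⟨Submodule.span ℤ {x}, Submodule.fg_span_singleton x⟩
      ⟨x, Submodule.mem_span_singleton_self x⟩, Φof _ _⟩
  let Ψ := LinearEquiv.ofBijective Φ ⟨Φinj, Φsurj⟩
  let i₀ : ι := ⟨N₀, hfg⟩
  let f' : ∀ i j : ι, i ≤ j → (G i ⊗[ℤ] M) →ₗ[ℤ] (G j ⊗[ℤ] M) :=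
    fun i j h => LinearMap.rTensor M (f i j h)
  haveI hds' : DirectedSystem (fun P : ι => G P ⊗[ℤ] M) (fun i j h => f' i j h) := by
    constructor
    · intro i x
      show LinearMap.rTensor M (f i i le_rfl) x = x
      have hid : f i i le_rfl = LinearMap.id := by ext v; rfl
      rw [hid, LinearMap.rTensor_id, LinearMap.id_apply]
    · intro k j i hij hjk x
      show LinearMap.rTensor M (f j k hjk) (LinearMap.rTensor M (f i j hij) x)
        = LinearMap.rTensor M (f i k (hij.trans hjk)) x
      rw [← LinearMap.rTensor_comp_apply]
      congr 1
  have key : ∀ v : (↥N₀) ⊗[ℤ] M,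
      (TensorProduct.directLimitLeft f M).symm
        (Module.DirectLimit.of ℤ ι (fun P : ι => G P ⊗[ℤ] M) f' i₀ v)
      = LinearMap.rTensor M (Module.DirectLimit.of ℤ ι G f i₀) v := by
    intro v
    induction v using TensorProduct.induction_on with
    | zero => rw [map_zero, map_zero, map_zero]
    | tmul g m => rw [TensorProduct.directLimitLeft_symm_of_tmul, LinearMap.rTensor_tmul]
    | add a b ha hb => rw [map_add, map_add, ha, hb, map_add]
  have hrTΦ : ∀ v, LinearMap.rTensor M Φ v
      = (TensorProduct.congr Ψ (LinearEquiv.refl ℤ M)).toLinearMap v := by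
    intro v
    induction v using TensorProduct.induction_on with
    | zero => rw [map_zero, map_zero]
    | tmul g m =>
      rw [LinearMap.rTensor_tmul]
      show _ = (TensorProduct.congr Ψ (LinearEquiv.refl ℤ M)) (g ⊗ₜ m)
      rw [TensorProduct.congr_tmul]
      rfl
    | add a b ha hb => rw [map_add, map_add, ha, hb]
  have hinj : Function.Injective (LinearMap.rTensor M Φ) := by
    intro a b hab
    rw [hrTΦ, hrTΦ] at hab
    exact (TensorProduct.congr Ψ (LinearEquiv.refl ℤ M)).injective hab
  have hz : LinearMap.rTensor M Φ
      (LinearMap.rTensor M (Module.DirectLimit.of ℤ ι G f i₀) u) = 0 := by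
    rw [← LinearMap.rTensor_comp_apply]
    have hco : Φ ∘ₗ Module.DirectLimit.of ℤ ι G f i₀ = N₀.subtype := by
      ext x; exact Φof i₀ x
    rw [hco, h]
  have h1 : LinearMap.rTensor M (Module.DirectLimit.of ℤ ι G f i₀) u = 0 :=
    hinj (by rw [hz, map_zero])
  have hω0 : Module.DirectLimit.of ℤ ι (fun P : ι => G P ⊗[ℤ] M) f' i₀ u = 0 := by
    have h2 := (key u).trans h1
    rwa [LinearEquiv.symm_apply_eq, map_zero] at h2
  obtain ⟨j, hij, hj⟩ := Module.DirectLimit.of.zero_exact hω0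
  exact ⟨j.1, hij, j.2, hj⟩

end VFG
section M1

variable {M : Type} [AddCommGroup M]

/-- If `L ≤ A₁` has "torsion-free quotient", then `L ⊗ M → A₁ ⊗ M` is injective. -/
lemma step_inj {A₁ : Type} [AddCommGroup A₁] (L : Submodule ℤ A₁)
    (htf : ∀ (c : ℤ) (v : A₁), c ≠ 0 → c • v ∈ L → v ∈ L)
    (u : (↥L) ⊗[ℤ] M) (hu : LinearMap.rTensor M L.subtype u = 0) : u = 0 := by
  classical
  obtain ⟨N₀', hN₀'fin, hsub⟩ := TensorProduct.exists_finite_submodule_left_of_setFinite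
    {u} (Set.finite_singleton u)
  obtain ⟨u₀, hu₀⟩ := hsub rfl
  set N₀ : Submodule ℤ A₁ := N₀'.map L.subtype with hN₀
  have hN₀fg : N₀.FG := (Module.Finite.iff_fg.mp hN₀'fin).map _
  let e : (↥N₀') ≃ₗ[ℤ] ↥N₀ := Submodule.equivMapOfInjective L.subtype L.injective_subtype N₀'
  have hcomm : N₀.subtype ∘ₗ (e : ↥N₀' →ₗ[ℤ] ↥N₀) = L.subtype ∘ₗ N₀'.subtype := by
    ext x; rfl
  set u₀' : (↥N₀) ⊗[ℤ] M := LinearMap.rTensor M (e : ↥N₀' →ₗ[ℤ] ↥N₀) u₀ with hu₀'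
  have h0 : LinearMap.rTensor M N₀.subtype u₀' = 0 := by
    rw [hu₀', ← LinearMap.rTensor_comp_apply, hcomm, LinearMap.rTensor_comp_apply, hu₀, hu]
  obtain ⟨N₁, hle, hN₁fg, hvan⟩ := vanish_fg N₀ hN₀fg u₀' h0
  set L₀ : Submodule ℤ A₁ := L ⊓ N₁ with hL₀
  have hN₀L₀ : N₀ ≤ L₀ := le_inf (Submodule.map_subtype_le L N₀') hle
  set u₁ : (↥L₀) ⊗[ℤ] M := LinearMap.rTensor M (Submodule.inclusion hN₀L₀) u₀' with hu₁
  have h1 : LinearMap.rTensor M (Submodule.inclusion (inf_le_right : L₀ ≤ N₁)) u₁ = 0 := by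
    rw [hu₁, ← LinearMap.rTensor_comp_apply]
    have hcc : Submodule.inclusion (inf_le_right : L₀ ≤ N₁) ∘ₗ Submodule.inclusion hN₀L₀
        = Submodule.inclusion hle := by ext x; rfl
    rw [hcc, hvan]
  -- split the inclusion L₀ ≤ N₁
  set W : Submodule ℤ ↥N₁ := L₀.comap N₁.subtype with hW
  haveI : Module.Finite ℤ ↥N₁ := Module.Finite.iff_fg.mpr hN₁fg
  haveI : Module.Finite ℤ (↥N₁ ⧸ W) := Module.Finite.of_surjective W.mkQ W.mkQ_surjective
  haveI : NoZeroSMulDivisors ℤ (↥N₁ ⧸ W) := by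
    constructor
    intro c q hcq
    by_cases hc : c = 0
    · exact Or.inl hc
    · right
      obtain ⟨v, rfl⟩ := W.mkQ_surjective q
      have hmem : c • v ∈ W := by
        rw [← map_smul] at hcq
        rwa [Submodule.mkQ_apply, Submodule.Quotient.mk_eq_zero] at hcq
      have hmL : c • (v : A₁) ∈ L := (Submodule.mem_inf.mp hmem).1
      have hvL : (v : A₁) ∈ L := htf c v hc hmL
      have hvL₀ : (v : A₁) ∈ L₀ := Submodule.mem_inf.mpr ⟨hvL, v.2⟩
      rw [Submodule.mkQ_apply]
      exact (Submodule.Quotient.mk_eq_zero W).mpr hvL₀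
  haveI : Module.Free ℤ (↥N₁ ⧸ W) := Module.free_of_finite_type_torsion_free'
  obtain ⟨s, hs⟩ := Module.projective_lifting_property W.mkQ LinearMap.id W.mkQ_surjective
  have hτmem : ∀ (c : ↥N₁), (N₁.subtype ∘ₗ (LinearMap.id - s ∘ₗ W.mkQ)) c ∈ L₀ := by
    intro v
    show N₁.subtype (v - s (W.mkQ v)) ∈ L₀
    have : v - s (W.mkQ v) ∈ W := by
      rw [← Submodule.Quotient.mk_eq_zero (p := W), ← Submodule.mkQ_apply, map_sub]
      have := LinearMap.congr_fun hs (W.mkQ v)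
      simp only [LinearMap.comp_apply, LinearMap.id_apply] at this
      rw [this, sub_self]
    exact this
  let ρ : ↥N₁ →ₗ[ℤ] ↥L₀ :=
    LinearMap.codRestrict L₀ (N₁.subtype ∘ₗ (LinearMap.id - s ∘ₗ W.mkQ)) hτmem
  have hρ : ρ ∘ₗ Submodule.inclusion (inf_le_right : L₀ ≤ N₁) = LinearMap.id := by
    ext w
    show N₁.subtype ((Submodule.inclusion (inf_le_right : L₀ ≤ N₁) w)
      - s (W.mkQ (Submodule.inclusion (inf_le_right : L₀ ≤ N₁) w))) = (w : A₁)
    have hWmem : Submodule.inclusion (inf_le_right : L₀ ≤ N₁) w ∈ W := w.2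
    have : W.mkQ (Submodule.inclusion (inf_le_right : L₀ ≤ N₁) w) = 0 := by
      rw [Submodule.mkQ_apply, Submodule.Quotient.mk_eq_zero]; exact hWmem
    rw [this, map_zero, sub_zero]; rfl
  have hu₁0 : u₁ = 0 := by
    have := congrArg (LinearMap.rTensor M ρ) h1
    rw [← LinearMap.rTensor_comp_apply, hρ, LinearMap.rTensor_id, LinearMap.id_apply,
      map_zero] at this
    exact this
  have hfin : u = LinearMap.rTensor M (Submodule.inclusion (inf_le_left : L₀ ≤ L)) u₁ := by
    rw [hu₁, ← LinearMap.rTensor_comp_apply, hu₀', ← LinearMap.rTensor_comp_apply]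
    have hcc : (Submodule.inclusion (inf_le_left : L₀ ≤ L) ∘ₗ Submodule.inclusion hN₀L₀)
        ∘ₗ (e : ↥N₀' →ₗ[ℤ] ↥N₀) = N₀'.subtype := by ext x; rfl
    rw [hcc, hu₀]
  rw [hfin, hu₁0, map_zero]

/-- Transfer of exactness along `⊗ M` for ℤ-modules with enough torsion-freeness. -/
lemma exact_rTensor {A₃ A₂ A₁ A₀ : Type}
    [AddCommGroup A₃] [AddCommGroup A₂] [AddCommGroup A₁] [AddCommGroup A₀]
    [NoZeroSMulDivisors ℤ A₁] [NoZeroSMulDivisors ℤ A₀]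
    (f₃ : A₃ →ₗ[ℤ] A₂) (f₂ : A₂ →ₗ[ℤ] A₁) (f₁ : A₁ →ₗ[ℤ] A₀)
    (hker : ∀ a : A₂, f₂ a = 0 → ∃ b, f₃ b = a)
    (hmid0 : ∀ a : A₂, f₁ (f₂ a) = 0)
    (hmid : ∀ v : A₁, f₁ v = 0 → ∃ a, f₂ a = v)
    (x : A₂ ⊗[ℤ] M) (hx : LinearMap.rTensor M f₂ x = 0) :
    ∃ w : A₃ ⊗[ℤ] M, LinearMap.rTensor M f₃ w = x := by
  classical
  set L : Submodule ℤ A₁ := LinearMap.ker f₁ with hL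
  let p : A₂ →ₗ[ℤ] ↥L := f₂.codRestrict L (fun a => LinearMap.mem_ker.mpr (hmid0 a))
  have hpsub : L.subtype ∘ₗ p = f₂ := by ext a; rfl
  have htf : ∀ (c : ℤ) (v : A₁), c ≠ 0 → c • v ∈ L → v ∈ L := by
    intro c v hc hcv
    have hz : c • f₁ v = 0 := by
      rw [← map_smul]; exact LinearMap.mem_ker.mp hcv
    rcases smul_eq_zero.mp hz with h | h
    · exact absurd h hc
    · exact LinearMap.mem_ker.mpr h
  have hpu : LinearMap.rTensor M p x = 0 := by
    apply step_inj L htf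
    rw [← LinearMap.rTensor_comp_apply, hpsub]
    exact hx
  obtain ⟨S, hS⟩ := TensorProduct.exists_finset x
  set N₂ : Submodule ℤ ↥L := Submodule.span ℤ (↑(S.image (fun t => p t.1))) with hN₂
  have hmem : ∀ t ∈ S, p t.1 ∈ N₂ := fun t ht =>
    Submodule.subset_span (Finset.mem_coe.mpr (Finset.mem_image_of_mem _ ht))
  set u₂ : (↥N₂) ⊗[ℤ] M :=
    ∑ t ∈ S.attach, (⟨p t.1.1, hmem t.1 t.2⟩ : ↥N₂) ⊗ₜ[ℤ] t.1.2 with hu₂def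
  have hu₂ : LinearMap.rTensor M N₂.subtype u₂ = LinearMap.rTensor M p x := by
    rw [hu₂def, map_sum, hS, map_sum]
    rw [← Finset.sum_attach S (fun t => LinearMap.rTensor M p (t.1 ⊗ₜ[ℤ] t.2))]
    apply Finset.sum_congr rfl
    intro t _
    rw [LinearMap.rTensor_tmul, LinearMap.rTensor_tmul]
    rfl
  have hu₂0 : LinearMap.rTensor M N₂.subtype u₂ = 0 := by rw [hu₂, hpu]
  have hN₂fg : N₂.FG := Submodule.fg_span (Finset.finite_toSet _)
  obtain ⟨N₃, hle₃, hN₃fg, hvan₃⟩ := vanish_fg N₂ hN₂fg u₂ hu₂0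
  haveI : Module.Finite ℤ ↥N₃ := Module.Finite.iff_fg.mpr hN₃fg
  haveI : Module.Free ℤ ↥N₃ := Module.free_of_finite_type_torsion_free'
  have hpsurj : Function.Surjective p := by
    intro l
    obtain ⟨a, ha⟩ := hmid l.1 l.2
    exact ⟨a, Subtype.ext ha⟩
  obtain ⟨σ, hσ⟩ := Module.projective_lifting_property p N₃.subtype hpsurj
  have hzero : ∑ t ∈ S.attach,
      (σ ⟨(p t.1.1 : ↥L), hle₃ (hmem t.1 t.2)⟩) ⊗ₜ[ℤ] t.1.2 = 0 := by
    have : ∑ t ∈ S.attach, (σ ⟨(p t.1.1 : ↥L), hle₃ (hmem t.1 t.2)⟩) ⊗ₜ[ℤ] t.1.2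
        = LinearMap.rTensor M σ (LinearMap.rTensor M (Submodule.inclusion hle₃) u₂) := by
      rw [hu₂def, map_sum, map_sum]
      apply Finset.sum_congr rfl
      intro t _
      rw [LinearMap.rTensor_tmul, LinearMap.rTensor_tmul]
      congr 2
    rw [this, hvan₃, map_zero]
  have hker' : ∀ t : {x // x ∈ S}, f₂ (t.1.1 - σ ⟨(p t.1.1 : ↥L), hle₃ (hmem t.1 t.2)⟩) = 0 := by
    intro t
    have hp : p (t.1.1 - σ ⟨(p t.1.1 : ↥L), hle₃ (hmem t.1 t.2)⟩) = 0 := by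
      rw [map_sub]
      have := LinearMap.congr_fun hσ (⟨(p t.1.1 : ↥L), hle₃ (hmem t.1 t.2)⟩ : ↥N₃)
      simp only [LinearMap.comp_apply] at this
      rw [this]
      exact sub_eq_zero.mpr rfl
    have := congrArg L.subtype hp
    rw [← LinearMap.comp_apply, hpsub] at this
    simpa using this
  choose b hb using fun t : {x // x ∈ S} => hker _ (hker' t)
  refine ⟨∑ t ∈ S.attach, (b t) ⊗ₜ[ℤ] t.1.2, ?_⟩
  rw [map_sum]
  have : ∀ t ∈ S.attach, LinearMap.rTensor M f₃ ((b t) ⊗ₜ[ℤ] t.1.2)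
      = t.1.1 ⊗ₜ[ℤ] t.1.2 - (σ ⟨(p t.1.1 : ↥L), hle₃ (hmem t.1 t.2)⟩) ⊗ₜ[ℤ] t.1.2 := by
    intro t _
    rw [LinearMap.rTensor_tmul, hb t, TensorProduct.sub_tmul]
  rw [Finset.sum_congr rfl this, Finset.sum_sub_distrib, hzero, sub_zero, hS,
    ← Finset.sum_attach S (fun t => t.1 ⊗ₜ[ℤ] t.2)]

end M1
section Cone

/-- The mapping-cone differential `(a, y) ↦ (-(d a), δ a + e y)`. -/
noncomputable def coneMap {A B A' B' : Type}
    [AddCommGroup A] [AddCommGroup B] [AddCommGroup A'] [AddCommGroup B']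
    (d : A →ₗ[ℤ] B) (δ : A →ₗ[ℤ] B') (e : A' →ₗ[ℤ] B') : (A × A') →ₗ[ℤ] (B × B') :=
  LinearMap.prod (-(d ∘ₗ LinearMap.fst ℤ A A'))
    ((δ ∘ₗ LinearMap.fst ℤ A A') + (e ∘ₗ LinearMap.snd ℤ A A'))

@[simp] lemma coneMap_apply {A B A' B' : Type}
    [AddCommGroup A] [AddCommGroup B] [AddCommGroup A'] [AddCommGroup B']
    (d : A →ₗ[ℤ] B) (δ : A →ₗ[ℤ] B') (e : A' →ₗ[ℤ] B') (v : A × A') :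
    coneMap d δ e v = (-(d v.1), δ v.1 + e v.2) := rfl

lemma coneMap_comp_inl {A B A' B' : Type}
    [AddCommGroup A] [AddCommGroup B] [AddCommGroup A'] [AddCommGroup B']
    (d : A →ₗ[ℤ] B) (δ : A →ₗ[ℤ] B') (e : A' →ₗ[ℤ] B') :
    coneMap d δ e ∘ₗ LinearMap.inl ℤ A A'
      = LinearMap.inl ℤ B B' ∘ₗ (-d) + LinearMap.inr ℤ B B' ∘ₗ δ := by
  apply LinearMap.ext; intro a
  simp [Prod.ext_iff]

lemma coneMap_comp_inr {A B A' B' : Type}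
    [AddCommGroup A] [AddCommGroup B] [AddCommGroup A'] [AddCommGroup B']
    (d : A →ₗ[ℤ] B) (δ : A →ₗ[ℤ] B') (e : A' →ₗ[ℤ] B') :
    coneMap d δ e ∘ₗ LinearMap.inr ℤ A A' = LinearMap.inr ℤ B B' ∘ₗ e := by
  apply LinearMap.ext; intro a
  simp [Prod.ext_iff]

variable {M : Type} [AddCommGroup M]

lemma prod_split {A B : Type} [AddCommGroup A] [AddCommGroup B] (v : (A × B) ⊗[ℤ] M) :
    LinearMap.rTensor M (LinearMap.inl ℤ A B) (LinearMap.rTensor M (LinearMap.fst ℤ A B) v)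
      + LinearMap.rTensor M (LinearMap.inr ℤ A B)
          (LinearMap.rTensor M (LinearMap.snd ℤ A B) v) = v := by
  have h : (LinearMap.inl ℤ A B ∘ₗ LinearMap.fst ℤ A B)
      + (LinearMap.inr ℤ A B ∘ₗ LinearMap.snd ℤ A B) = LinearMap.id := by
    apply LinearMap.ext; intro w; simp
  have h2 := LinearMap.congr_fun (congrArg (LinearMap.rTensor M) h) v
  rw [LinearMap.rTensor_add, LinearMap.rTensor_comp, LinearMap.rTensor_comp,
    LinearMap.rTensor_id] at h2
  simpa using h2

lemma rT_fst_inl {A B : Type} [AddCommGroup A] [AddCommGroup B] (u : A ⊗[ℤ] M) :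
    LinearMap.rTensor M (LinearMap.fst ℤ A B) (LinearMap.rTensor M (LinearMap.inl ℤ A B) u)
      = u := by
  rw [← LinearMap.rTensor_comp_apply, LinearMap.fst_comp_inl, LinearMap.rTensor_id,
    LinearMap.id_apply]

lemma rT_fst_inr {A B : Type} [AddCommGroup A] [AddCommGroup B] (u : B ⊗[ℤ] M) :
    LinearMap.rTensor M (LinearMap.fst ℤ A B) (LinearMap.rTensor M (LinearMap.inr ℤ A B) u)
      = 0 := by
  rw [← LinearMap.rTensor_comp_apply]
  have : LinearMap.fst ℤ A B ∘ₗ LinearMap.inr ℤ A B = 0 := by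
    apply LinearMap.ext; intro w; simp
  rw [this, LinearMap.rTensor_zero, LinearMap.zero_apply]

lemma rT_snd_inl {A B : Type} [AddCommGroup A] [AddCommGroup B] (u : A ⊗[ℤ] M) :
    LinearMap.rTensor M (LinearMap.snd ℤ A B) (LinearMap.rTensor M (LinearMap.inl ℤ A B) u)
      = 0 := by
  rw [← LinearMap.rTensor_comp_apply]
  have : LinearMap.snd ℤ A B ∘ₗ LinearMap.inl ℤ A B = 0 := by
    apply LinearMap.ext; intro w; simp
  rw [this, LinearMap.rTensor_zero, LinearMap.zero_apply]

lemma rT_snd_inr {A B : Type} [AddCommGroup A] [AddCommGroup B] (u : B ⊗[ℤ] M) :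
    LinearMap.rTensor M (LinearMap.snd ℤ A B) (LinearMap.rTensor M (LinearMap.inr ℤ A B) u)
      = u := by
  rw [← LinearMap.rTensor_comp_apply, LinearMap.snd_comp_inr, LinearMap.rTensor_id,
    LinearMap.id_apply]

/-- forward exactness of the cone at one spot, from the quasi-isomorphism data -/
lemma cone_forward
    {P Q R S' P' Q' : Type} [AddCommGroup P] [AddCommGroup Q] [AddCommGroup R]
    [AddCommGroup S'] [AddCommGroup P'] [AddCommGroup Q']
    (dPQ : P →ₗ[ℤ] Q) (dQR : Q →ₗ[ℤ] R) (dS'P' : S' →ₗ[ℤ] P') (dP'Q' : P' →ₗ[ℤ] Q')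
    (δP : P →ₗ[ℤ] P') (δQ : Q →ₗ[ℤ] Q')
    (hcomm : ∀ a, δQ (dPQ a) = dP'Q' (δP a))
    (hisoA : ∀ c : Q, dQR c = 0 → (∃ y : P', δQ c = dP'Q' y) → ∃ a : P, dPQ a = c)
    (hisoB : ∀ w : P', dP'Q' w = 0 → ∃ u : P, dPQ u = 0 ∧ ∃ z : S', δP u - w = dS'P' z) :
    ∀ v : Q × P', dQR v.1 = 0 → δQ v.1 + dP'Q' v.2 = 0 →
      ∃ w : P × S', coneMap dPQ δP dS'P' w = v := by
  rintro ⟨c, y⟩ hc hcy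
  obtain ⟨a₀, ha₀⟩ := hisoA c hc ⟨-y, by
    rw [map_neg]
    exact eq_neg_of_add_eq_zero_left hcy⟩
  have hw0 : dP'Q' (y - δP (-a₀)) = 0 := by
    have h1 : dP'Q' (δP a₀) = δQ c := by rw [← hcomm, ha₀]
    rw [map_sub, map_neg, map_neg, h1, sub_neg_eq_add, add_comm]
    exact hcy
  obtain ⟨u, hu0, z₀, hz₀⟩ := hisoB (y - δP (-a₀)) hw0
  refine ⟨(-a₀ + u, -z₀), ?_⟩
  rw [coneMap_apply]
  have hfst : -(dPQ (-a₀ + u)) = c := by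
    rw [map_add, hu0, add_zero, map_neg, neg_neg, ha₀]
  have hsnd : δP (-a₀ + u) + dS'P' (-z₀) = y := by
    have h3 : δP u - dS'P' z₀ = y - δP (-a₀) := by rw [← hz₀]; abel
    have h5 : δP (-a₀ + u) + dS'P' (-z₀) = (δP u - dS'P' z₀) + δP (-a₀) := by
      rw [map_add, map_neg dS'P']; abel
    rw [h5, h3]; abel
  rw [Prod.ext_iff]
  exact ⟨hfst, hsnd⟩


lemma cone_expand {M : Type} [AddCommGroup M] {A B A' B' : Type} [AddCommGroup A] [AddCommGroup B]
    [AddCommGroup A'] [AddCommGroup B']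
    (d : A →ₗ[ℤ] B) (δ : A →ₗ[ℤ] B') (e : A' →ₗ[ℤ] B') (ww : (A × A') ⊗[ℤ] M) :
    LinearMap.rTensor M (coneMap d δ e) ww
      = LinearMap.rTensor M (LinearMap.inl ℤ B B')
          (-(LinearMap.rTensor M d (LinearMap.rTensor M (LinearMap.fst ℤ A A') ww)))
        + (LinearMap.rTensor M (LinearMap.inr ℤ B B')
            (LinearMap.rTensor M δ (LinearMap.rTensor M (LinearMap.fst ℤ A A') ww))
          + LinearMap.rTensor M (LinearMap.inr ℤ B B')
            (LinearMap.rTensor M e (LinearMap.rTensor M (LinearMap.snd ℤ A A') ww))) := by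
  have hsp := prod_split (M := M) ww
  conv_lhs => rw [← hsp]
  rw [map_add,
    ← LinearMap.rTensor_comp_apply M (coneMap d δ e) (LinearMap.inl ℤ A A'),
    ← LinearMap.rTensor_comp_apply M (coneMap d δ e) (LinearMap.inr ℤ A A'),
    coneMap_comp_inl, coneMap_comp_inr, LinearMap.rTensor_add,
    LinearMap.rTensor_comp, LinearMap.rTensor_comp, LinearMap.rTensor_comp]
  simp only [LinearMap.add_apply, LinearMap.comp_apply, LinearMap.rTensor_neg,
    LinearMap.neg_apply]
  rw [map_neg]
  abel

/-- The main abstract lemma: tensoring an elementwise quasi-isomorphism between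
(windows of) complexes of torsion-free abelian groups. -/
lemma qis_rTensor
    {C0 C1 C2 C3 C4 Dm D0 D1 D2 D3 : Type}
    [AddCommGroup C0] [AddCommGroup C1] [AddCommGroup C2] [AddCommGroup C3] [AddCommGroup C4]
    [AddCommGroup Dm] [AddCommGroup D0] [AddCommGroup D1] [AddCommGroup D2] [AddCommGroup D3]
    [NoZeroSMulDivisors ℤ C2] [NoZeroSMulDivisors ℤ C3] [NoZeroSMulDivisors ℤ C4]
    [NoZeroSMulDivisors ℤ D1] [NoZeroSMulDivisors ℤ D2] [NoZeroSMulDivisors ℤ D3]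
    (d0 : C0 →ₗ[ℤ] C1) (d1 : C1 →ₗ[ℤ] C2) (d2 : C2 →ₗ[ℤ] C3) (d3 : C3 →ₗ[ℤ] C4)
    (em : Dm →ₗ[ℤ] D0) (e0 : D0 →ₗ[ℤ] D1) (e1 : D1 →ₗ[ℤ] D2) (e2 : D2 →ₗ[ℤ] D3)
    (δ0 : C0 →ₗ[ℤ] D0) (δ1 : C1 →ₗ[ℤ] D1) (δ2 : C2 →ₗ[ℤ] D2) (δ3 : C3 →ₗ[ℤ] D3)
    (dd1 : ∀ a, d2 (d1 a) = 0) (dd2 : ∀ a, d3 (d2 a) = 0)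
    (ee0 : ∀ a, e1 (e0 a) = 0) (ee1 : ∀ a, e2 (e1 a) = 0)
    (com1 : ∀ a, δ1 (d0 a) = e0 (δ0 a)) (com2 : ∀ a, δ2 (d1 a) = e1 (δ1 a))
    (com3 : ∀ a, δ3 (d2 a) = e2 (δ2 a))
    (A0 : ∀ c : C1, d1 c = 0 → (∃ y : D0, δ1 c = e0 y) → ∃ a : C0, d0 a = c)
    (A1 : ∀ c : C2, d2 c = 0 → (∃ y : D1, δ2 c = e1 y) → ∃ a : C1, d1 a = c)
    (A2 : ∀ c : C3, d3 c = 0 → (∃ y : D2, δ3 c = e2 y) → ∃ a : C2, d2 a = c)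
    (Bm : ∀ w : D0, e0 w = 0 → ∃ u : C0, d0 u = 0 ∧ ∃ z : Dm, δ0 u - w = em z)
    (B0 : ∀ w : D1, e1 w = 0 → ∃ u : C1, d1 u = 0 ∧ ∃ z : D0, δ1 u - w = e0 z)
    (B1 : ∀ w : D2, e2 w = 0 → ∃ u : C2, d2 u = 0 ∧ ∃ z : D1, δ2 u - w = e1 z) :
    (∀ x : C1 ⊗[ℤ] M, LinearMap.rTensor M d1 x = 0 →
      (∃ y : D0 ⊗[ℤ] M, LinearMap.rTensor M δ1 x = LinearMap.rTensor M e0 y) →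
      ∃ a : C0 ⊗[ℤ] M, LinearMap.rTensor M d0 a = x) ∧
    (∀ w : D1 ⊗[ℤ] M, LinearMap.rTensor M e1 w = 0 →
      ∃ u : C1 ⊗[ℤ] M, LinearMap.rTensor M d1 u = 0 ∧
        ∃ z : D0 ⊗[ℤ] M, LinearMap.rTensor M δ1 u - w = LinearMap.rTensor M e0 z) := by
  -- the cone differentials
  set pm : (C0 × Dm) →ₗ[ℤ] (C1 × D0) := coneMap d0 δ0 em with hpm
  set p0 : (C1 × D0) →ₗ[ℤ] (C2 × D1) := coneMap d1 δ1 e0 with hp0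
  set p1 : (C2 × D1) →ₗ[ℤ] (C3 × D2) := coneMap d2 δ2 e1 with hp1
  set p2 : (C3 × D2) →ₗ[ℤ] (C4 × D3) := coneMap d3 δ3 e2 with hp2
  -- plain exactness of the cone
  have ex0 : ∀ v : C1 × D0, p0 v = 0 → ∃ w, pm w = v := by
    intro v hv
    rw [hp0, coneMap_apply, Prod.mk_eq_zero] at hv
    obtain ⟨h1, h2⟩ := hv
    rw [neg_eq_zero] at h1
    exact cone_forward d0 d1 em e0 δ0 δ1 com1 A0 Bm v h1 h2
  have ex1 : ∀ v : C2 × D1, p1 v = 0 → ∃ w, p0 w = v := by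
    intro v hv
    rw [hp1, coneMap_apply, Prod.mk_eq_zero] at hv
    obtain ⟨h1, h2⟩ := hv
    rw [neg_eq_zero] at h1
    exact cone_forward d1 d2 e0 e1 δ1 δ2 com2 A1 B0 v h1 h2
  have ex2 : ∀ v : C3 × D2, p2 v = 0 → ∃ w, p1 w = v := by
    intro v hv
    rw [hp2, coneMap_apply, Prod.mk_eq_zero] at hv
    obtain ⟨h1, h2⟩ := hv
    rw [neg_eq_zero] at h1
    exact cone_forward d2 d3 e1 e2 δ2 δ3 com3 A2 B1 v h1 h2
  -- the cone is a complex
  have sq0 : ∀ v : C1 × D0, p1 (p0 v) = 0 := by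
    intro v
    rw [hp0, hp1, coneMap_apply, coneMap_apply, Prod.mk_eq_zero]
    constructor
    · show -(d2 (-(d1 v.1))) = 0
      simp [dd1]
    · show δ2 (-(d1 v.1)) + e1 (δ1 v.1 + e0 v.2) = 0
      simp [map_add, com2, ee0]
  have sq1 : ∀ v : C2 × D1, p2 (p1 v) = 0 := by
    intro v
    rw [hp1, hp2, coneMap_apply, coneMap_apply, Prod.mk_eq_zero]
    constructor
    · show -(d3 (-(d2 v.1))) = 0
      simp [dd2]
    · show δ3 (-(d2 v.1)) + e2 (δ2 v.1 + e1 v.2) = 0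
      simp [map_add, com3, ee1]
  -- tensored exactness at the two relevant spots
  haveI : NoZeroSMulDivisors ℤ (C2 × D1) := by
    constructor; intro c x h
    rcases eq_or_ne c 0 with hc | hc
    · exact Or.inl hc
    right
    rw [Prod.ext_iff] at h ⊢
    simp only [Prod.smul_fst, Prod.smul_snd, Prod.fst_zero, Prod.snd_zero] at h ⊢
    exact ⟨(smul_eq_zero.mp h.1).resolve_left hc, (smul_eq_zero.mp h.2).resolve_left hc⟩
  haveI : NoZeroSMulDivisors ℤ (C3 × D2) := by
    constructor; intro c x h
    rcases eq_or_ne c 0 with hc | hc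
    · exact Or.inl hc
    right
    rw [Prod.ext_iff] at h ⊢
    simp only [Prod.smul_fst, Prod.smul_snd, Prod.fst_zero, Prod.snd_zero] at h ⊢
    exact ⟨(smul_eq_zero.mp h.1).resolve_left hc, (smul_eq_zero.mp h.2).resolve_left hc⟩
  haveI : NoZeroSMulDivisors ℤ (C4 × D3) := by
    constructor; intro c x h
    rcases eq_or_ne c 0 with hc | hc
    · exact Or.inl hc
    right
    rw [Prod.ext_iff] at h ⊢
    simp only [Prod.smul_fst, Prod.smul_snd, Prod.fst_zero, Prod.snd_zero] at h ⊢
    exact ⟨(smul_eq_zero.mp h.1).resolve_left hc, (smul_eq_zero.mp h.2).resolve_left hc⟩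
  have EX1 : ∀ xx : (C1 × D0) ⊗[ℤ] M, LinearMap.rTensor M p0 xx = 0 →
      ∃ ww : (C0 × Dm) ⊗[ℤ] M, LinearMap.rTensor M pm ww = xx :=
    fun xx hxx => exact_rTensor pm p0 p1 ex0 sq0 ex1 xx hxx
  have EX2 : ∀ xx : (C2 × D1) ⊗[ℤ] M, LinearMap.rTensor M p1 xx = 0 →
      ∃ ww : (C1 × D0) ⊗[ℤ] M, LinearMap.rTensor M p0 ww = xx :=
    fun xx hxx => exact_rTensor p0 p1 p2 ex1 sq1 ex2 xx hxx
  constructor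
  · -- injectivity-type statement
    intro x hx hy'
    obtain ⟨y, hy⟩ := hy'
    set v : (C1 × D0) ⊗[ℤ] M :=
      LinearMap.rTensor M (LinearMap.inl ℤ C1 D0) x
        - LinearMap.rTensor M (LinearMap.inr ℤ C1 D0) y with hv
    have hfstv : LinearMap.rTensor M (LinearMap.fst ℤ C1 D0) v = x := by
      rw [hv, map_sub, rT_fst_inl, rT_fst_inr, sub_zero]
    have hsndv : LinearMap.rTensor M (LinearMap.snd ℤ C1 D0) v = -y := by
      rw [hv, map_sub, rT_snd_inl, rT_snd_inr, zero_sub]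
    have hv0 : LinearMap.rTensor M p0 v = 0 := by
      rw [hp0, cone_expand d1 δ1 e0 v, hfstv, hsndv, hx, hy, neg_zero, map_zero, map_neg,
        map_neg, zero_add, add_neg_cancel]
    obtain ⟨w, hw⟩ := EX1 v hv0
    rw [hpm, cone_expand d0 δ0 em w] at hw
    have ha := congrArg (LinearMap.rTensor M (LinearMap.fst ℤ C1 D0)) hw
    rw [map_add, map_add, rT_fst_inl, rT_fst_inr, rT_fst_inr, add_zero, add_zero,
      hfstv] at ha
    refine ⟨-(LinearMap.rTensor M (LinearMap.fst ℤ C0 Dm) w), ?_⟩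
    rw [map_neg, ha]
  · -- surjectivity-type statement
    intro w hw
    set v : (C2 × D1) ⊗[ℤ] M := LinearMap.rTensor M (LinearMap.inr ℤ C2 D1) w with hv
    have hv0 : LinearMap.rTensor M p1 v = 0 := by
      rw [hv, ← LinearMap.rTensor_comp_apply, hp1, coneMap_comp_inr,
        LinearMap.rTensor_comp, LinearMap.comp_apply, hw, map_zero]
    obtain ⟨ww, hww⟩ := EX2 v hv0
    rw [hp0, cone_expand d1 δ1 e0 ww] at hww
    have ha := congrArg (LinearMap.rTensor M (LinearMap.fst ℤ C2 D1)) hww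
    rw [map_add, map_add, rT_fst_inl, rT_fst_inr, rT_fst_inr, add_zero, add_zero, hv,
      rT_fst_inr] at ha
    have hb := congrArg (LinearMap.rTensor M (LinearMap.snd ℤ C2 D1)) hww
    rw [map_add, map_add, rT_snd_inl, rT_snd_inr, rT_snd_inr, zero_add, hv,
      rT_snd_inr] at hb
    have h1 : LinearMap.rTensor M d1
        (LinearMap.rTensor M (LinearMap.fst ℤ C1 D0) ww) = 0 := by
      rw [← neg_neg (LinearMap.rTensor M d1 (LinearMap.rTensor M (LinearMap.fst ℤ C1 D0) ww)),
        ha, neg_zero]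
    refine ⟨LinearMap.rTensor M (LinearMap.fst ℤ C1 D0) ww, h1,
      -(LinearMap.rTensor M (LinearMap.snd ℤ C1 D0) ww), ?_⟩
    rw [map_neg, ← hb]
    abel

end Cone
section Tensoring

lemma dsl_comp {X : ℤ → Type} [∀ i, AddCommGroup (X i)] {M : Type} [AddCommGroup M]
    (a : ⨁ i, X i) (m : M) (l : ℤ) :
    (TensorProduct.directSumLeft ℤ ℤ X M (a ⊗ₜ[ℤ] m)) l = (a l) ⊗ₜ[ℤ] m := by
  induction a using DirectSum.induction_on with
  | zero => simp
  | of i x =>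
    rw [← DirectSum.lof_eq_of ℤ, TensorProduct.directSumLeft_tmul_lof]
    by_cases h : l = i
    · subst h
      rw [DirectSum.lof_eq_of, DirectSum.of_eq_same, DirectSum.lof_eq_of,
        DirectSum.of_eq_same]
    · rw [DirectSum.lof_eq_of, DirectSum.of_eq_of_ne _ _ _ h,
        DirectSum.lof_eq_of, DirectSum.of_eq_of_ne _ _ _ h,
        TensorProduct.zero_tmul]
  | add x y hx hy =>
    rw [TensorProduct.add_tmul, map_add, DirectSum.add_apply, hx, hy, DirectSum.add_apply,
      TensorProduct.add_tmul]

variable (k : ℤ) (X : ℤ → ℤ → Type) [∀ i j, AddCommGroup (X i j)]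
  (Y : ℤ → ℤ → Type) [∀ i j, AddCommGroup (Y i j)]
  (M : Type) [AddCommGroup M]

lemma tensorQ_sq
    (d : ∀ j : ℤ, (⨁ i, X i j) →ₗ[ℤ] ⨁ i, X i (j + k))
    (hdd : ∀ j, d (j + k) ∘ₗ d j = 0) (j : ℤ) :
    tensorQ k X d M (j + k) ∘ₗ tensorQ k X d M j = 0 := by
  apply LinearMap.ext; intro v
  simp only [tensorQ, LinearMap.comp_apply, LinearEquiv.coe_coe, LinearMap.zero_apply]
  rw [LinearEquiv.symm_apply_apply, ← LinearMap.rTensor_comp_apply, hdd j,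
    LinearMap.rTensor_zero, LinearMap.zero_apply, map_zero]

lemma tensorQ_filt
    (d : ∀ j : ℤ, (⨁ i, X i j) →ₗ[ℤ] ⨁ i, X i (j + k))
    (hfilt : ∀ (j i : ℤ) (x : X i j) (l : ℤ), l ≤ i →
      (d j (DirectSum.lof ℤ ℤ (fun l => X l j) i x)) l = 0)
    (j i : ℤ) (x : (X i j) ⊗[ℤ] M) (l : ℤ) (hl : l ≤ i) :
    (tensorQ k X d M j (DirectSum.lof ℤ ℤ (fun l => (X l j) ⊗[ℤ] M) i x)) l = 0 := by
  induction x using TensorProduct.induction_on with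
  | zero => rw [map_zero, map_zero]; rfl
  | tmul v m =>
    simp only [tensorQ, LinearMap.comp_apply, LinearEquiv.coe_coe]
    erw [TensorProduct.directSumLeft_symm_lof_tmul, LinearMap.rTensor_tmul, dsl_comp,
      hfilt j i v l hl, TensorProduct.zero_tmul]
  | add u w hu hw =>
    rw [map_add, map_add, DirectSum.add_apply, hu, hw, add_zero]

lemma tensorG_filt
    (γ : ∀ j : ℤ, (⨁ i, X i j) →ₗ[ℤ] ⨁ i, Y i j)
    (hγfilt : ∀ (j i : ℤ) (x : X i j) (l : ℤ), l < i →
      (γ j (DirectSum.lof ℤ ℤ (fun l => X l j) i x)) l = 0)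
    (j i : ℤ) (x : (X i j) ⊗[ℤ] M) (l : ℤ) (hl : l < i) :
    (tensorG X Y γ M j (DirectSum.lof ℤ ℤ (fun l => (X l j) ⊗[ℤ] M) i x)) l = 0 := by
  induction x using TensorProduct.induction_on with
  | zero => rw [map_zero, map_zero]; rfl
  | tmul v m =>
    simp only [tensorG, LinearMap.comp_apply, LinearEquiv.coe_coe]
    erw [TensorProduct.directSumLeft_symm_lof_tmul, LinearMap.rTensor_tmul, dsl_comp,
      hγfilt j i v l hl, TensorProduct.zero_tmul]
  | add u w hu hw =>
    rw [map_add, map_add, DirectSum.add_apply, hu, hw, add_zero]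

lemma tensorG_comm
    (d : ∀ j : ℤ, (⨁ i, X i j) →ₗ[ℤ] ⨁ i, X i (j + k))
    (dh : ∀ j : ℤ, (⨁ i, Y i j) →ₗ[ℤ] ⨁ i, Y i (j + k))
    (γ : ∀ j : ℤ, (⨁ i, X i j) →ₗ[ℤ] ⨁ i, Y i j)
    (hγd : ∀ j, γ (j + k) ∘ₗ d j = dh j ∘ₗ γ j) (j : ℤ) :
    tensorG X Y γ M (j + k) ∘ₗ tensorQ k X d M j
      = tensorQ k Y dh M j ∘ₗ tensorG X Y γ M j := by
  apply LinearMap.ext; intro v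
  simp only [tensorQ, tensorG, LinearMap.comp_apply, LinearEquiv.coe_coe]
  rw [LinearEquiv.symm_apply_apply, LinearEquiv.symm_apply_apply,
    ← LinearMap.rTensor_comp_apply, ← LinearMap.rTensor_comp_apply, hγd j]

lemma leadingPart_tensor
    (d : ∀ j : ℤ, (⨁ i, X i j) →ₗ[ℤ] ⨁ i, X i (j + k)) (i j : ℤ) :
    leadingPart ℤ k (fun i j => (X i j) ⊗[ℤ] M) (tensorQ k X d M) i j
      = LinearMap.rTensor M (leadingPart ℤ k X d i j) := by
  apply TensorProduct.ext'
  intro v m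
  show (tensorQ k X d M j (DirectSum.lof ℤ ℤ (fun l => (X l j) ⊗[ℤ] M) i (v ⊗ₜ[ℤ] m))) (i + 1)
      = LinearMap.rTensor M (leadingPart ℤ k X d i j) (v ⊗ₜ[ℤ] m)
  rw [LinearMap.rTensor_tmul]
  simp only [tensorQ, LinearMap.comp_apply, LinearEquiv.coe_coe]
  erw [TensorProduct.directSumLeft_symm_lof_tmul, LinearMap.rTensor_tmul, dsl_comp]
  rfl

end Tensoring
/-- Tensoring a `P`-quasi-isomorphism of `Q(k)`-objects of free abelian groups with an
abelian group `M`: `(X ⊗ M, d ⊗ id)` and `(X̂ ⊗ M, d̂ ⊗ id)` are again `Q(k)`-objects,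
their leading parts are `e ⊗ id` and `ê ⊗ id`, the map `γ ⊗ id` satisfies the same
compatibilities, and `δ ⊗ id` still induces isomorphisms on the homology of the
leading-part complexes (stated elementwise). -/
theorem stmt_12 (k : ℤ)
    (X Xh : ℤ → ℤ → Type) [∀ i j, AddCommGroup (X i j)] [∀ i j, AddCommGroup (Xh i j)]
    [∀ i j, Module.Free ℤ (X i j)] [∀ i j, Module.Free ℤ (Xh i j)]
    (d : ∀ j : ℤ, (⨁ i, X i j) →ₗ[ℤ] ⨁ i, X i (j + k))
    (dh : ∀ j : ℤ, (⨁ i, Xh i j) →ₗ[ℤ] ⨁ i, Xh i (j + k))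
    (hdd : ∀ j, d (j + k) ∘ₗ d j = 0)
    (hfilt : ∀ (j i : ℤ) (x : X i j) (l : ℤ), l ≤ i →
      (d j (DirectSum.lof ℤ ℤ (fun l => X l j) i x)) l = 0)
    (hddh : ∀ j, dh (j + k) ∘ₗ dh j = 0)
    (hfilth : ∀ (j i : ℤ) (x : Xh i j) (l : ℤ), l ≤ i →
      (dh j (DirectSum.lof ℤ ℤ (fun l => Xh l j) i x)) l = 0)
    (γ : ∀ j : ℤ, (⨁ i, X i j) →ₗ[ℤ] ⨁ i, Xh i j)
    (hγd : ∀ j, γ (j + k) ∘ₗ d j = dh j ∘ₗ γ j)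
    (hγfilt : ∀ (j i : ℤ) (x : X i j) (l : ℤ), l < i →
      (γ j (DirectSum.lof ℤ ℤ (fun l => X l j) i x)) l = 0)
    (hiso : ∀ i j : ℤ,
      (∀ x : X (i + 1) (j + k), x ∈ LinearMap.ker (leadingPart ℤ k X d (i + 1) (j + k)) →
        diagPart ℤ X Xh γ (i + 1) (j + k) x ∈ LinearMap.range (leadingPart ℤ k Xh dh i j) →
        x ∈ LinearMap.range (leadingPart ℤ k X d i j)) ∧
      (∀ y : Xh (i + 1) (j + k), y ∈ LinearMap.ker (leadingPart ℤ k Xh dh (i + 1) (j + k)) →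
        ∃ x ∈ LinearMap.ker (leadingPart ℤ k X d (i + 1) (j + k)),
          diagPart ℤ X Xh γ (i + 1) (j + k) x - y
            ∈ LinearMap.range (leadingPart ℤ k Xh dh i j)))
    (M : Type) [AddCommGroup M] :
    -- (1) `(X ⊗ M, d ⊗ id)` is a `Q(k)`-object …
    (∀ j, tensorQ k X d M (j + k) ∘ₗ tensorQ k X d M j = 0) ∧
    (∀ (j i : ℤ) (x : (X i j) ⊗[ℤ] M) (l : ℤ), l ≤ i →
      (tensorQ k X d M j (DirectSum.lof ℤ ℤ (fun l => (X l j) ⊗[ℤ] M) i x)) l = 0) ∧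
    -- … and so is `(X̂ ⊗ M, d̂ ⊗ id)`, …
    (∀ j, tensorQ k Xh dh M (j + k) ∘ₗ tensorQ k Xh dh M j = 0) ∧
    (∀ (j i : ℤ) (x : (Xh i j) ⊗[ℤ] M) (l : ℤ), l ≤ i →
      (tensorQ k Xh dh M j (DirectSum.lof ℤ ℤ (fun l => (Xh l j) ⊗[ℤ] M) i x)) l = 0) ∧
    -- (2) their leading parts are `e ⊗ id_M` and `ê ⊗ id_M`, …
    (∀ i j : ℤ, leadingPart ℤ k (fun i j => (X i j) ⊗[ℤ] M) (tensorQ k X d M) i j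
      = LinearMap.rTensor M (leadingPart ℤ k X d i j)) ∧
    (∀ i j : ℤ, leadingPart ℤ k (fun i j => (Xh i j) ⊗[ℤ] M) (tensorQ k Xh dh M) i j
      = LinearMap.rTensor M (leadingPart ℤ k Xh dh i j)) ∧
    -- (3) `γ ⊗ id_M` satisfies the same compatibilities, …
    (∀ j, tensorG X Xh γ M (j + k) ∘ₗ tensorQ k X d M j
      = tensorQ k Xh dh M j ∘ₗ tensorG X Xh γ M j) ∧
    (∀ (j i : ℤ) (x : (X i j) ⊗[ℤ] M) (l : ℤ), l < i →
      (tensorG X Xh γ M j (DirectSum.lof ℤ ℤ (fun l => (X l j) ⊗[ℤ] M) i x)) l = 0) ∧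
    -- (4) and `δ ⊗ id_M` induces isomorphisms on the homology of the leading parts.
    (∀ i j : ℤ,
      (∀ x : (X (i + 1) (j + k)) ⊗[ℤ] M,
        x ∈ LinearMap.ker (LinearMap.rTensor M (leadingPart ℤ k X d (i + 1) (j + k))) →
        LinearMap.rTensor M (diagPart ℤ X Xh γ (i + 1) (j + k)) x
          ∈ LinearMap.range (LinearMap.rTensor M (leadingPart ℤ k Xh dh i j)) →
        x ∈ LinearMap.range (LinearMap.rTensor M (leadingPart ℤ k X d i j))) ∧
      (∀ y : (Xh (i + 1) (j + k)) ⊗[ℤ] M,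
        y ∈ LinearMap.ker (LinearMap.rTensor M (leadingPart ℤ k Xh dh (i + 1) (j + k))) →
        ∃ x ∈ LinearMap.ker (LinearMap.rTensor M (leadingPart ℤ k X d (i + 1) (j + k))),
          LinearMap.rTensor M (diagPart ℤ X Xh γ (i + 1) (j + k)) x - y
            ∈ LinearMap.range (LinearMap.rTensor M (leadingPart ℤ k Xh dh i j)))) := by
  refine ⟨tensorQ_sq k X M d hdd, tensorQ_filt k X M d hfilt,
    tensorQ_sq k Xh M dh hddh, tensorQ_filt k Xh M dh hfilth,
    leadingPart_tensor k X M d, leadingPart_tensor k Xh M dh,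
    tensorG_comm k X Xh M d dh γ hγd, tensorG_filt X Xh M γ hγfilt, ?_⟩
  intro i j
  obtain ⟨m, rfl⟩ : ∃ m : ℤ, i = m + 1 := ⟨i - 1, by ring⟩
  obtain ⟨n, rfl⟩ : ∃ n : ℤ, j = n + k := ⟨j - k, by ring⟩
  haveI : ∀ i j, NoZeroSMulDivisors ℤ (X i j) := fun i j => by
    haveI : IsAddTorsionFree (X i j) := IsAddTorsionFree.of_isTorsionFree ℤ (X i j)
    infer_instance
  haveI : ∀ i j, NoZeroSMulDivisors ℤ (Xh i j) := fun i j => by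
    haveI : IsAddTorsionFree (Xh i j) := IsAddTorsionFree.of_isTorsionFree ℤ (Xh i j)
    infer_instance
  have main := qis_rTensor (M := M)
    (leadingPart ℤ k X d (m+1) (n+k))
    (leadingPart ℤ k X d (m+1+1) (n+k+k))
    (leadingPart ℤ k X d (m+1+1+1) (n+k+k+k))
    (leadingPart ℤ k X d (m+1+1+1+1) (n+k+k+k+k))
    (leadingPart ℤ k Xh dh m n)
    (leadingPart ℤ k Xh dh (m+1) (n+k))
    (leadingPart ℤ k Xh dh (m+1+1) (n+k+k))
    (leadingPart ℤ k Xh dh (m+1+1+1) (n+k+k+k))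
    (diagPart ℤ X Xh γ (m+1) (n+k))
    (diagPart ℤ X Xh γ (m+1+1) (n+k+k))
    (diagPart ℤ X Xh γ (m+1+1+1) (n+k+k+k))
    (diagPart ℤ X Xh γ (m+1+1+1+1) (n+k+k+k+k))
    (fun a => leadingPart_sq k X d hdd hfilt (m+1+1) (n+k+k) a)
    (fun a => leadingPart_sq k X d hdd hfilt (m+1+1+1) (n+k+k+k) a)
    (fun a => leadingPart_sq k Xh dh hddh hfilth (m+1) (n+k) a)
    (fun a => leadingPart_sq k Xh dh hddh hfilth (m+1+1) (n+k+k) a)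
    (fun a => diagPart_comm k X Xh d dh hfilt hfilth γ hγd hγfilt (m+1) (n+k) a)
    (fun a => diagPart_comm k X Xh d dh hfilt hfilth γ hγd hγfilt (m+1+1) (n+k+k) a)
    (fun a => diagPart_comm k X Xh d dh hfilt hfilth γ hγd hγfilt (m+1+1+1) (n+k+k+k) a)
    (fun c hc hy => by
      obtain ⟨y, hy'⟩ := hy
      exact LinearMap.mem_range.mp ((hiso (m+1) (n+k)).1 c (LinearMap.mem_ker.mpr hc)
        (LinearMap.mem_range.mpr ⟨y, hy'.symm⟩)))
    (fun c hc hy => by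
      obtain ⟨y, hy'⟩ := hy
      exact LinearMap.mem_range.mp ((hiso (m+1+1) (n+k+k)).1 c (LinearMap.mem_ker.mpr hc)
        (LinearMap.mem_range.mpr ⟨y, hy'.symm⟩)))
    (fun c hc hy => by
      obtain ⟨y, hy'⟩ := hy
      exact LinearMap.mem_range.mp ((hiso (m+1+1+1) (n+k+k+k)).1 c (LinearMap.mem_ker.mpr hc)
        (LinearMap.mem_range.mpr ⟨y, hy'.symm⟩)))
    (fun w hw => by
      obtain ⟨u, hu, hmem⟩ := (hiso m n).2 w (LinearMap.mem_ker.mpr hw)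
      obtain ⟨z, hz⟩ := LinearMap.mem_range.mp hmem
      exact ⟨u, LinearMap.mem_ker.mp hu, z, hz.symm⟩)
    (fun w hw => by
      obtain ⟨u, hu, hmem⟩ := (hiso (m+1) (n+k)).2 w (LinearMap.mem_ker.mpr hw)
      obtain ⟨z, hz⟩ := LinearMap.mem_range.mp hmem
      exact ⟨u, LinearMap.mem_ker.mp hu, z, hz.symm⟩)
    (fun w hw => by
      obtain ⟨u, hu, hmem⟩ := (hiso (m+1+1) (n+k+k)).2 w (LinearMap.mem_ker.mpr hw)
      obtain ⟨z, hz⟩ := LinearMap.mem_range.mp hmem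
      exact ⟨u, LinearMap.mem_ker.mp hu, z, hz.symm⟩)
  constructor
  · intro x hx hrange
    obtain ⟨y, hy⟩ := LinearMap.mem_range.mp hrange
    obtain ⟨a, ha⟩ := main.1 x (LinearMap.mem_ker.mp hx) ⟨y, hy.symm⟩
    exact LinearMap.mem_range.mpr ⟨a, ha⟩
  · intro y hy
    obtain ⟨u, hu, z, hz⟩ := main.2 y (LinearMap.mem_ker.mp hy)
    exact ⟨u, LinearMap.mem_ker.mpr hu, LinearMap.mem_range.mpr ⟨z, hz.symm⟩⟩
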